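/- For any Parseval frame Ψ = {ψ_i}_{i=1}^M for F^N, the total coherence satisfies ∑_{i≠j} |⟨ψ_i,ψ_j⟩| ≤ sqrt(N(M−N)(M−1)). -/

import Mathlib

open Matrix Finset

noncomputable def totalCoherence {N M : ℕ} (Φ : Matrix (Fin N) (Fin M) ℂ) : ℝ :=
  ∑ i, ∑ j ∈ Finset.univ.erase i, ‖(Φᴴ * Φ) i j‖

/-- The total coherence of any Parseval frame is at most $\sqrt{N(M-N)(M-1)}$. -/
theorem totalCoherence_le {N M : ℕ} (hNM : N ≤ M)
    (Ψ : Matrix (Fin N) (Fin M) ℂ) (hΨ : Ψ * Ψᴴ = 1) :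
    totalCoherence Ψ ≤ Real.sqrt ((N : ℝ) * ((M : ℝ) - (N : ℝ)) * ((M : ℝ) - 1)) := by
  rcases Nat.eq_zero_or_pos M with hM0 | hM
  · subst hM0
    have hN0 : N = 0 := Nat.le_zero.mp hNM
    subst hN0
    simp [totalCoherence]
  set G := Ψᴴ * Ψ with hG
  -- G is idempotent
  have hG2 : G * G = G := by
    rw [hG, Matrix.mul_assoc, ← Matrix.mul_assoc Ψ, hΨ, Matrix.one_mul]
  have htr : G.trace = (N : ℂ) := by
    rw [hG, Matrix.trace_mul_comm, hΨ, Matrix.trace_one]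
    simp
  -- Frobenius norm squared = N
  have hfrob : ∑ i, ∑ j, (‖G i j‖) ^ 2 = (N : ℝ) := by
    have h1 : (G * Gᴴ).trace = ∑ i, ∑ j, ((Complex.normSq (G i j) : ℂ)) := by
      simp [Matrix.trace, Matrix.diag, Matrix.mul_apply, Matrix.conjTranspose_apply,
        Complex.mul_conj]
    have hGherm : Gᴴ = G := by
      rw [hG, Matrix.conjTranspose_mul, Matrix.conjTranspose_conjTranspose]
    rw [hGherm, hG2, htr] at h1
    have h2 : ((N : ℝ) : ℂ) = ((∑ i, ∑ j, Complex.normSq (G i j) : ℝ) : ℂ) := by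
      push_cast
      exact h1
    have h3 := Complex.ofReal_injective h2
    simp only [Complex.sq_norm]
    exact h3.symm
  -- diagonal entries
  have hdiagval : ∀ i, G i i = ((∑ k, Complex.normSq (Ψ k i) : ℝ) : ℂ) := by
    intro i
    simp [hG, Matrix.mul_apply, Matrix.conjTranspose_apply, Complex.normSq_eq_conj_mul_self]
  have hdiagabs : ∀ i, ‖G i i‖ = ∑ k, Complex.normSq (Ψ k i) := by
    intro i
    rw [hdiagval i, Complex.norm_real, Real.norm_eq_abs, abs_of_nonneg]
    exact Finset.sum_nonneg fun k _ => Complex.normSq_nonneg _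
  have hdiagsum : ∑ i, ‖G i i‖ = (N : ℝ) := by
    have h1 : G.trace = ((∑ i, ∑ k, Complex.normSq (Ψ k i) : ℝ) : ℂ) := by
      rw [Matrix.trace]
      refine Eq.trans (Finset.sum_congr rfl fun i _ => hdiagval i) ?_
      push_cast
      rfl
    rw [htr] at h1
    have h2 := Complex.ofReal_injective ((by push_cast at h1 ⊢; exact h1.symm :
      ((∑ i, ∑ k, Complex.normSq (Ψ k i) : ℝ) : ℂ) = ((N : ℝ) : ℂ)))
    calc ∑ i, ‖G i i‖ = ∑ i, ∑ k, Complex.normSq (Ψ k i) :=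
          Finset.sum_congr rfl fun i _ => hdiagabs i
      _ = (N : ℝ) := h2
  -- Cauchy–Schwarz on diagonal
  have hD : ((N : ℝ)) ^ 2 ≤ (M : ℝ) * ∑ i, (‖G i i‖) ^ 2 := by
    have := sq_sum_le_card_mul_sum_sq (s := (Finset.univ : Finset (Fin M)))
      (f := fun i => ‖G i i‖)
    rw [hdiagsum] at this
    simpa using this
  -- split Frobenius into diagonal and off-diagonal
  set D : ℝ := ∑ i, (‖G i i‖) ^ 2 with hDdef
  set Q : ℝ := ∑ i, ∑ j ∈ Finset.univ.erase i, (‖G i j‖) ^ 2 with hQdef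
  have hsplit : D + Q = (N : ℝ) := by
    rw [← hfrob, hDdef, hQdef, ← Finset.sum_add_distrib]
    exact Finset.sum_congr rfl fun i _ =>
      Finset.add_sum_erase _ (fun j => (‖G i j‖) ^ 2) (Finset.mem_univ i)
  -- Cauchy–Schwarz on off-diagonal
  set S : ℝ := totalCoherence Ψ with hSdef
  have hSnonneg : 0 ≤ S := by
    apply Finset.sum_nonneg
    intro i _
    exact Finset.sum_nonneg fun j _ => norm_nonneg _
  have hQnonneg : 0 ≤ Q :=
    Finset.sum_nonneg fun i _ => Finset.sum_nonneg fun j _ => sq_nonneg _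
  have hcard : (((Finset.univ : Finset (Fin M)).sigma
      (fun i => Finset.univ.erase i)).card : ℝ) = (M : ℝ) * ((M : ℝ) - 1) := by
    rw [Finset.card_sigma]
    have : ∀ i : Fin M, (Finset.univ.erase i).card = M - 1 := fun i => by
      rw [Finset.card_erase_of_mem (Finset.mem_univ i), Finset.card_univ, Fintype.card_fin]
    simp only [this, Finset.sum_const, Finset.card_univ, Fintype.card_fin, smul_eq_mul]
    push_cast [Nat.cast_sub hM]
    ring
  have hCS : S ^ 2 ≤ (M : ℝ) * ((M : ℝ) - 1) * Q := by
    have h1 := sq_sum_le_card_mul_sum_sq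
      (s := (Finset.univ : Finset (Fin M)).sigma (fun i => Finset.univ.erase i))
      (f := fun p : Σ _ : Fin M, Fin M => ‖G p.1 p.2‖)
    have hS' : (∑ p ∈ (Finset.univ : Finset (Fin M)).sigma (fun i => Finset.univ.erase i),
        ‖G p.1 p.2‖) = S := Finset.sum_sigma _ _ _
    have hQ' : (∑ p ∈ (Finset.univ : Finset (Fin M)).sigma (fun i => Finset.univ.erase i),
        (‖G p.1 p.2‖) ^ 2) = Q := Finset.sum_sigma _ _ _
    rw [hS', hQ', hcard] at h1
    exact h1
  -- combine
  have hMpos : (0 : ℝ) < M := by exact_mod_cast hM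
  have hM1 : (1 : ℝ) ≤ (M : ℝ) := by exact_mod_cast hM
  have hfinal : S ^ 2 ≤ (N : ℝ) * ((M : ℝ) - (N : ℝ)) * ((M : ℝ) - 1) := by
    nlinarith [hCS, hD, hsplit, hQnonneg, mul_pos hMpos hMpos]
  have hrhs : 0 ≤ (N : ℝ) * ((M : ℝ) - (N : ℝ)) * ((M : ℝ) - 1) :=
    le_trans (sq_nonneg S) hfinal
  exact (Real.le_sqrt hSnonneg hrhs).mpr hfinal
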